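/- Let Q be a probability measure on a measurable space 𝒴 and f : 𝒴 → ℝ measurable such that for some θ > 0, m₁ := ∫ exp{θ f} dQ < ∞ and m₂ := ∫ f² dQ < ∞. Then there exists a constant b = b(m₁, m₂, θ) > 0 such that for every n ≥ 16/θ⁴ and every probability measure P on the product space 𝒴^n with D(P ‖ Q^n) < ∞, one has (1/n) Σ_{j=1}^n E_P[f(Y_j)] ≤ E_Q[f] + n^{−3/4} D(P ‖ Q^n) + b·n^{−1/4}, where Y_j denotes the j-th coordinate on 𝒴^n and Q^n is the n-fold product of Q. -/

import Mathlib

open MeasureTheory ProbabilityTheory Filter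
open scoped ENNReal NNReal

universe u

/-- Relative entropy (Kullback–Leibler divergence): `∫ log (dP/dQ) dP` when `P ≪ Q`
and the log-likelihood ratio is integrable, and `+∞` otherwise. -/
noncomputable def relEnt {Ω : Type*} [MeasurableSpace Ω] (P Q : Measure Ω) : ℝ≥0∞ :=
  open scoped Classical in
  if P ≪ Q ∧ Integrable (llr P Q) P then ENNReal.ofReal (∫ ω, llr P Q ω ∂P) else ⊤

section Aux

/-- Elementary bound: `e^u ≤ 1 + u + u²(1 + e^u)` for all `u`. -/
lemma aux_exp_quadratic (u : ℝ) : Real.exp u ≤ 1 + u + u ^ 2 * (1 + Real.exp u) := by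
  have h1 : 1 - u ≤ (Real.exp u)⁻¹ := by
    rw [← Real.exp_neg]
    linarith [Real.add_one_le_exp (-u)]
  have key : Real.exp u * (1 - u) ≤ 1 := by
    calc Real.exp u * (1 - u) ≤ Real.exp u * (Real.exp u)⁻¹ :=
          mul_le_mul_of_nonneg_left h1 (Real.exp_pos u).le
      _ = 1 := mul_inv_cancel₀ (Real.exp_ne_zero u)
  rcases le_or_gt 0 u with hu | hu
  · nlinarith [Real.exp_pos u, sq_nonneg u,
      mul_le_mul_of_nonneg_left key (by linarith : (0:ℝ) ≤ 1 + u)]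
  · have h2 : Real.exp u ≤ 1 + u + u ^ 2 := by
      have h3 : (0:ℝ) < 1 - u := by linarith
      nlinarith [key, mul_nonneg (mul_nonneg (neg_nonneg.2 hu.le) (neg_nonneg.2 hu.le))
        (neg_nonneg.2 hu.le)]
    nlinarith [mul_nonneg (sq_nonneg u) (Real.exp_pos u).le]

/-- Bound `x² e^{s x} ≤ x² + (16/θ²) e^{θ x}` for `0 ≤ s ≤ θ/2`. -/
lemma aux_sq_mul_exp {θ s : ℝ} (hθ : 0 < θ) (hs0 : 0 ≤ s) (hs : s ≤ θ / 2) (x : ℝ) :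
    x ^ 2 * Real.exp (s * x) ≤ x ^ 2 + 16 / θ ^ 2 * Real.exp (θ * x) := by
  rcases le_or_gt x 0 with hx | hx
  · have h1 : Real.exp (s * x) ≤ 1 := by
      rw [Real.exp_le_one_iff]
      exact mul_nonpos_of_nonneg_of_nonpos hs0 hx
    have h2 : (0:ℝ) ≤ 16 / θ ^ 2 * Real.exp (θ * x) := by positivity
    nlinarith [sq_nonneg x]
  · have ht : θ * x / 4 ≤ Real.exp (θ * x / 4) := by
      linarith [Real.add_one_le_exp (θ * x / 4)]
    have hsq : (θ * x / 4) * (θ * x / 4) ≤ Real.exp (θ * x / 2) := by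
      have h := mul_le_mul ht ht (by positivity) (Real.exp_pos _).le
      rwa [← Real.exp_add, (by ring : θ * x / 4 + θ * x / 4 = θ * x / 2)] at h
    have h1 : x ^ 2 ≤ 16 / θ ^ 2 * Real.exp (θ * x / 2) := by
      have hx2 : x ^ 2 = 16 / θ ^ 2 * ((θ * x / 4) * (θ * x / 4)) := by
        field_simp
        ring
      rw [hx2]
      exact mul_le_mul_of_nonneg_left hsq (by positivity)
    have h3 : Real.exp (s * x) ≤ Real.exp (θ * x / 2) := by
      apply Real.exp_le_exp.2
      nlinarith
    calc x ^ 2 * Real.exp (s * x)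
        ≤ (16 / θ ^ 2 * Real.exp (θ * x / 2)) * Real.exp (θ * x / 2) :=
          mul_le_mul h1 h3 (Real.exp_pos _).le (by positivity)
      _ = 16 / θ ^ 2 * Real.exp (θ * x) := by
          rw [mul_assoc, ← Real.exp_add, (by ring : θ * x / 2 + θ * x / 2 = θ * x)]
      _ ≤ x ^ 2 + 16 / θ ^ 2 * Real.exp (θ * x) := by nlinarith [sq_nonneg x]

variable {α : Type*} [MeasurableSpace α]

/-- Gibbs' inequality: relative entropy between probability measures is nonnegative. -/
lemma aux_integral_llr_nonneg {μ ν : Measure α} [IsProbabilityMeasure μ] [IsProbabilityMeasure ν]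
    (h : μ ≪ ν) (hint : Integrable (llr μ ν) μ) : 0 ≤ ∫ x, llr μ ν x ∂μ := by
  set r : α → ℝ := fun x => (μ.rnDeriv ν x).toReal with hr_def
  have hr_meas : Measurable r := (Measure.measurable_rnDeriv μ ν).ennreal_toReal
  have h_pos : ∀ᵐ x ∂μ, 0 < μ.rnDeriv ν x := Measure.rnDeriv_pos h
  have h_fin : ∀ᵐ x ∂μ, μ.rnDeriv ν x < ⊤ := h.ae_le (Measure.rnDeriv_lt_top μ ν)
  -- `∫⁻ r⁻¹ dμ ≤ 1`
  have hlint : ∫⁻ x, ENNReal.ofReal (r x)⁻¹ ∂μ ≤ 1 := by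
    conv_lhs => rw [← Measure.withDensity_rnDeriv_eq μ ν h]
    rw [lintegral_withDensity_eq_lintegral_mul _ (Measure.measurable_rnDeriv μ ν)
      (g := fun x => ENNReal.ofReal (r x)⁻¹) (hr_meas.inv.ennreal_ofReal)]
    have hb : ∀ᵐ x ∂ν, (μ.rnDeriv ν x * ENNReal.ofReal (r x)⁻¹) ≤ 1 := by
      filter_upwards [Measure.rnDeriv_lt_top μ ν] with x hx
      rcases eq_or_ne (μ.rnDeriv ν x) 0 with h0 | h0
      · simp [hr_def, h0]
      · have hpos : 0 < r x := ENNReal.toReal_pos h0 hx.ne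
        rw [hr_def]
        rw [ENNReal.ofReal_inv_of_pos hpos, ENNReal.ofReal_toReal hx.ne]
        rw [ENNReal.mul_inv_cancel h0 hx.ne]
    calc ∫⁻ x, (μ.rnDeriv ν x * ENNReal.ofReal (r x)⁻¹) ∂ν ≤ ∫⁻ _, 1 ∂ν :=
          lintegral_mono_ae hb
      _ = 1 := by simp
  have hii : Integrable (fun x => (r x)⁻¹) μ := by
    refine ⟨hr_meas.inv.aestronglyMeasurable, ?_⟩
    rw [hasFiniteIntegral_iff_ofReal (Filter.Eventually.of_forall fun x => by positivity)]
    exact lt_of_le_of_lt hlint ENNReal.one_lt_top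
  have hkey : ∀ᵐ x ∂μ, -llr μ ν x ≤ (r x)⁻¹ - 1 := by
    filter_upwards [h_pos, h_fin] with x hx1 hx2
    have hrx : 0 < r x := ENNReal.toReal_pos hx1.ne' hx2.ne
    have : -llr μ ν x = Real.log (r x)⁻¹ := by
      rw [llr_def, Real.log_inv]
    rw [this]
    linarith [Real.log_le_sub_one_of_pos (inv_pos.2 hrx)]
  have hmono : ∫ x, -llr μ ν x ∂μ ≤ ∫ x, ((r x)⁻¹ - 1) ∂μ :=
    integral_mono_ae hint.neg (hii.sub (integrable_const 1)) hkey
  have hinv_le : ∫ x, (r x)⁻¹ ∂μ ≤ 1 := by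
    rw [integral_eq_lintegral_of_nonneg_ae (f := fun x => (r x)⁻¹) (Filter.Eventually.of_forall fun x => inv_nonneg.2 ENNReal.toReal_nonneg)
      hr_meas.inv.aestronglyMeasurable]
    calc (∫⁻ x, ENNReal.ofReal (r x)⁻¹ ∂μ).toReal ≤ (1 : ℝ≥0∞).toReal :=
          ENNReal.toReal_mono ENNReal.one_ne_top hlint
      _ = 1 := by simp
  rw [integral_neg] at hmono
  rw [integral_sub hii (integrable_const 1)] at hmono
  simp only [integral_const, measure_univ, ENNReal.toReal_one, probReal_univ, smul_eq_mul, one_mul] at hmono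
  linarith

/-- Donsker–Varadhan inequality. -/
lemma aux_dv {μ ν : Measure α} [IsProbabilityMeasure μ] [IsProbabilityMeasure ν]
    (h : μ ≪ ν) (hllr : Integrable (llr μ ν) μ) {g : α → ℝ}
    (hgμ : Integrable g μ) (hgν : Integrable (fun x => Real.exp (g x)) ν) :
    ∫ x, g x ∂μ ≤ ∫ x, llr μ ν x ∂μ + Real.log (∫ x, Real.exp (g x) ∂ν) := by
  haveI : IsProbabilityMeasure (ν.tilted g) := isProbabilityMeasure_tilted hgν
  have hac : μ ≪ ν.tilted g := h.trans (absolutelyContinuous_tilted hgν)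
  have hint' : Integrable (llr μ (ν.tilted g)) μ :=
    integrable_llr_tilted_right h hgμ hllr hgν
  have h0 : 0 ≤ ∫ x, llr μ (ν.tilted g) x ∂μ := aux_integral_llr_nonneg hac hint'
  rw [integral_llr_tilted_right h hgμ hgν hllr] at h0
  linarith

/-- Moment bound: `∫ e^{s f} dQ ≤ 1 + s ∫ f + s² (2 ∫ f² + (16/θ²) ∫ e^{θ f})`. -/
lemma aux_moment_bound (Q : Measure α) [IsProbabilityMeasure Q] (f : α → ℝ) (hf : Measurable f)
    {θ s : ℝ} (hθ : 0 < θ) (hs0 : 0 < s) (hs : s ≤ θ / 2)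
    (h1 : Integrable (fun y => Real.exp (θ * f y)) Q)
    (h2 : Integrable (fun y => f y ^ 2) Q) :
    Integrable (fun y => Real.exp (s * f y)) Q ∧ Integrable f Q ∧
      ∫ y, Real.exp (s * f y) ∂Q ≤
        1 + s * ∫ y, f y ∂Q +
          s ^ 2 * (2 * ∫ y, f y ^ 2 ∂Q + 16 / θ ^ 2 * ∫ y, Real.exp (θ * f y) ∂Q) := by
  have hintf : Integrable f Q := by
    refine Integrable.mono' (g := fun y => (1 + f y ^ 2) / 2)
      (((integrable_const (1:ℝ)).add h2).div_const 2)
      hf.aestronglyMeasurable (Filter.Eventually.of_forall fun y => ?_)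
    have := sq_nonneg (|f y| - 1)
    rw [Real.norm_eq_abs]
    have h := sq_abs (f y)
    nlinarith [abs_nonneg (f y)]
  have hints : Integrable (fun y => Real.exp (s * f y)) Q := by
    refine Integrable.mono' (g := fun y => 1 + Real.exp (θ * f y))
      ((integrable_const (1:ℝ)).add h1)
      ((hf.const_mul s).exp.aestronglyMeasurable) (Filter.Eventually.of_forall fun y => ?_)
    rw [Real.norm_eq_abs, abs_of_pos (Real.exp_pos _)]
    show Real.exp (s * f y) ≤ 1 + Real.exp (θ * f y)
    rcases le_or_gt 0 (f y) with hy | hy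
    · have : Real.exp (s * f y) ≤ Real.exp (θ * f y) := by
        apply Real.exp_le_exp.2
        nlinarith
      linarith
    · have : Real.exp (s * f y) ≤ 1 := by
        rw [Real.exp_le_one_iff]
        nlinarith
      linarith [Real.exp_pos (θ * f y)]
  refine ⟨hints, hintf, ?_⟩
  have hptwise : ∀ y, Real.exp (s * f y) ≤
      1 + s * f y + s ^ 2 * (2 * f y ^ 2 + 16 / θ ^ 2 * Real.exp (θ * f y)) := by
    intro y
    have hA := aux_exp_quadratic (s * f y)
    have hB := aux_sq_mul_exp hθ hs0.le hs (f y)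
    nlinarith [mul_le_mul_of_nonneg_left hB (sq_nonneg s), sq_nonneg (s * f y),
      mul_nonneg (sq_nonneg s) (sq_nonneg (f y))]
  have i1 : Integrable (fun y => 1 + s * f y) Q := (integrable_const 1).add (hintf.const_mul s)
  have i2 : Integrable (fun y => 2 * f y ^ 2 + 16 / θ ^ 2 * Real.exp (θ * f y)) Q :=
    (h2.const_mul 2).add (h1.const_mul _)
  have i3 : Integrable (fun y => s ^ 2 * (2 * f y ^ 2 + 16 / θ ^ 2 * Real.exp (θ * f y))) Q :=
    i2.const_mul _
  have hRHSint : Integrable (fun y =>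
      1 + s * f y + s ^ 2 * (2 * f y ^ 2 + 16 / θ ^ 2 * Real.exp (θ * f y))) Q := i1.add i3
  calc ∫ y, Real.exp (s * f y) ∂Q
      ≤ ∫ y, (1 + s * f y + s ^ 2 * (2 * f y ^ 2 + 16 / θ ^ 2 * Real.exp (θ * f y))) ∂Q :=
        integral_mono hints hRHSint hptwise
    _ = 1 + s * ∫ y, f y ∂Q +
          s ^ 2 * (2 * ∫ y, f y ^ 2 ∂Q + 16 / θ ^ 2 * ∫ y, Real.exp (θ * f y) ∂Q) := by
        rw [integral_add i1 i3,
          integral_add (integrable_const 1) (hintf.const_mul s),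
          integral_const_mul, integral_const_mul,
          integral_add (h2.const_mul 2) (h1.const_mul _),
          integral_const_mul, integral_const_mul]
        simp

end Aux

/-- Proposition 11 (empirical averages of non-Lipschitz single-letter functions):
if `f` satisfies the one-sided Cramér condition `m₁ = ∫ e^{θf} dQ < ∞` and
`m₂ = ∫ f² dQ < ∞`, then there is a constant `b = b(m₁, m₂, θ) > 0` such that
for all `n ≥ 16/θ⁴` and every probability measure `P` on `𝒴ⁿ` with finite
`D(P‖Qⁿ)`, the empirical average satisfies
`(1/n) ∑ⱼ E_P[f(Yⱼ)] ≤ E_Q[f] + n^{-3/4} D(P‖Qⁿ) + b n^{-1/4}`. -/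
theorem empirical_average_nonLipschitz (θ m₁ m₂ : ℝ) (hθ : 0 < θ) :
    ∃ b : ℝ, 0 < b ∧
      ∀ (𝒴 : Type u) (_ : MeasurableSpace 𝒴) (Q : Measure 𝒴),
        IsProbabilityMeasure Q →
        ∀ f : 𝒴 → ℝ, Measurable f →
          Integrable (fun y => Real.exp (θ * f y)) Q →
          (∫ y, Real.exp (θ * f y) ∂Q) = m₁ →
          Integrable (fun y => f y ^ 2) Q →
          (∫ y, f y ^ 2 ∂Q) = m₂ →
          ∀ n : ℕ, 16 / θ ^ 4 ≤ (n : ℝ) →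
            ∀ P : Measure (Fin n → 𝒴), IsProbabilityMeasure P →
              relEnt P (Measure.pi fun _ : Fin n => Q) < ⊤ →
              (∀ j : Fin n, Integrable (fun y => f (y j)) P) →
              (n : ℝ)⁻¹ * ∑ j : Fin n, ∫ y, f (y j) ∂P
                ≤ (∫ y, f y ∂Q)
                  + (n : ℝ) ^ (-(3 : ℝ) / 4) *
                      (relEnt P (Measure.pi fun _ : Fin n => Q)).toReal
                  + b * (n : ℝ) ^ (-(1 : ℝ) / 4) := by
  refine ⟨max (2 * m₂ + 16 / θ ^ 2 * m₁ + 1) 1, lt_of_lt_of_le one_pos (le_max_right _ _), ?_⟩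
  intro 𝒴 m𝒴 Q hQ f hf h1 hm1 h2 hm2 n hn P hP hD hint
  have hn0 : 0 < (n : ℝ) := lt_of_lt_of_le (by positivity) hn
  -- the parameter `s = n^{-1/4}` satisfies `0 < s ≤ θ/2`
  set s : ℝ := (n : ℝ) ^ (-(1 : ℝ) / 4) with hs_def
  have hs0 : 0 < s := Real.rpow_pos_of_pos hn0 _
  have hs_le : s ≤ θ / 2 := by
    have h16 : ((2 / θ) ^ (4 : ℕ) : ℝ) ≤ (n : ℝ) := by
      rw [div_pow]
      norm_num
      exact hn
    have hroot : 2 / θ ≤ (n : ℝ) ^ ((1 : ℝ) / 4) := by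
      have := Real.rpow_le_rpow (by positivity) h16 (by norm_num : (0:ℝ) ≤ 1/4)
      rwa [← Real.rpow_natCast (2 / θ) 4, ← Real.rpow_mul (by positivity : (0:ℝ) ≤ 2/θ),
        (by norm_num : ((4:ℕ):ℝ) * (1/4) = 1), Real.rpow_one] at this
    have hss : s = ((n : ℝ) ^ ((1 : ℝ) / 4))⁻¹ := by
      rw [hs_def, ← Real.rpow_neg hn0.le]
      norm_num
    rw [hss]
    have h2θ : 0 < 2 / θ := by positivity
    calc ((n : ℝ) ^ ((1 : ℝ) / 4))⁻¹ ≤ (2 / θ)⁻¹ := by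
          apply inv_anti₀ h2θ hroot
      _ = θ / 2 := by rw [inv_div]
  -- product measure
  set Qn : Measure (Fin n → 𝒴) := Measure.pi fun _ : Fin n => Q with hQn_def
  haveI : IsProbabilityMeasure Qn := by rw [hQn_def]; infer_instance
  -- extract absolute continuity and llr integrability from finiteness of relEnt
  have hcond : P ≪ Qn ∧ Integrable (llr P Qn) P := by
    by_contra hc
    rw [show relEnt P Qn = ⊤ from if_neg hc] at hD
    exact lt_irrefl _ hD
  obtain ⟨hac, hllr⟩ := hcond
  set D : ℝ := ∫ y, llr P Qn y ∂P with hD_def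
  have hD0 : 0 ≤ D := aux_integral_llr_nonneg hac hllr
  have hDtoReal : (relEnt P Qn).toReal = D := by
    rw [show relEnt P Qn = ENNReal.ofReal D from if_pos ⟨hac, hllr⟩, ENNReal.toReal_ofReal hD0]
  -- moment bound
  obtain ⟨hint_s, hint_f, hmb⟩ := aux_moment_bound Q f hf hθ hs0 hs_le h1 h2
  rw [hm1, hm2] at hmb
  set mf : ℝ := ∫ y, f y ∂Q with hmf_def
  set B : ℝ := 2 * m₂ + 16 / θ ^ 2 * m₁ with hB_def
  -- Donsker–Varadhan applied to `g y = ∑ j, s * f (y j)`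
  set g : (Fin n → 𝒴) → ℝ := fun y => ∑ j, s * f (y j) with hg_def
  have hgμ : Integrable g P :=
    integrable_finset_sum _ fun j _ => (hint j).const_mul s
  letI : MeasureSpace 𝒴 := { toMeasurableSpace := m𝒴, volume := Q }
  have hQn_vol : Qn = (volume : Measure (Fin n → 𝒴)) := rfl
  have hexp_prod : (fun y => Real.exp (g y)) =
      fun y : Fin n → 𝒴 => ∏ j : Fin n, Real.exp (s * f (y j)) := by
    funext y
    rw [hg_def, Real.exp_sum]
  have hgν : Integrable (fun y => Real.exp (g y)) Qn := by
    rw [hexp_prod, hQn_vol]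
    exact Integrable.fintype_prod (f := fun (_ : Fin n) (x : 𝒴) => Real.exp (s * f x))
      fun _ => hint_s
  have hintexp : ∫ y, Real.exp (g y) ∂Qn = (∫ x, Real.exp (s * f x) ∂Q) ^ n := by
    rw [hexp_prod, hQn_vol]
    rw [integral_fintype_prod_volume_eq_pow (ι := Fin n) (fun x => Real.exp (s * f x))]
    simp only [Fintype.card_fin]
    rfl
  have hdv : ∫ y, g y ∂P ≤ D + Real.log (∫ y, Real.exp (g y) ∂Qn) :=
    aux_dv hac hllr hgμ hgν
  have hgsum : ∫ y, g y ∂P = s * ∑ j : Fin n, ∫ y, f (y j) ∂P := by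
    rw [hg_def, integral_finset_sum _ fun j _ => (hint j).const_mul s, Finset.mul_sum]
    congr 1
    funext j
    exact integral_const_mul s _
  have hZpos : 0 < ∫ x, Real.exp (s * f x) ∂Q := integral_exp_pos hint_s
  have hlog : Real.log (∫ y, Real.exp (g y) ∂Qn) ≤ (n : ℝ) * (s * mf + s ^ 2 * B) := by
    rw [hintexp, Real.log_pow]
    have hlog1 : Real.log (∫ x, Real.exp (s * f x) ∂Q) ≤ s * mf + s ^ 2 * B := by
      have := Real.log_le_sub_one_of_pos hZpos
      linarith
    exact mul_le_mul_of_nonneg_left hlog1 hn0.le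
  have hkey : s * ∑ j : Fin n, ∫ y, f (y j) ∂P ≤ D + (n : ℝ) * (s * mf + s ^ 2 * B) := by
    rw [← hgsum]
    linarith
  -- arithmetic with rpow to conclude
  set c : ℝ := (n : ℝ) ^ (-(3 : ℝ) / 4) with hc_def
  have hc0 : 0 < c := Real.rpow_pos_of_pos hn0 _
  have hcs : c * s = (n : ℝ)⁻¹ := by
    rw [hc_def, hs_def, ← Real.rpow_add hn0, ← Real.rpow_neg_one (n : ℝ)]
    norm_num
  have hcns : c * ((n : ℝ) * s) = 1 := by
    rw [show c * ((n : ℝ) * s) = (c * s) * (n : ℝ) by ring, hcs,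
      inv_mul_cancel₀ hn0.ne']
  have hcns2 : c * ((n : ℝ) * s ^ 2) = s := by
    rw [show c * ((n : ℝ) * s ^ 2) = (c * ((n : ℝ) * s)) * s by ring, hcns, one_mul]
  have hmain : (n : ℝ)⁻¹ * ∑ j : Fin n, ∫ y, f (y j) ∂P ≤ mf + c * D + s * B := by
    have := mul_le_mul_of_nonneg_left hkey hc0.le
    calc (n : ℝ)⁻¹ * ∑ j : Fin n, ∫ y, f (y j) ∂P
        = c * (s * ∑ j : Fin n, ∫ y, f (y j) ∂P) := by rw [← mul_assoc, hcs]
      _ ≤ c * (D + (n : ℝ) * (s * mf + s ^ 2 * B)) := this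
      _ = c * D + (c * ((n : ℝ) * s)) * mf + (c * ((n : ℝ) * s ^ 2)) * B := by ring
      _ = mf + c * D + s * B := by rw [hcns, hcns2]; ring
  -- bound `B` by `b`
  have hm1' : 0 ≤ m₁ := hm1 ▸ integral_nonneg fun y => (Real.exp_pos _).le
  have hm2' : 0 ≤ m₂ := hm2 ▸ integral_nonneg fun y => sq_nonneg _
  have hBb : B ≤ max (2 * m₂ + 16 / θ ^ 2 * m₁ + 1) 1 := by
    refine le_trans ?_ (le_max_left _ _)
    rw [hB_def]
    linarith
  have hsB : s * B ≤ max (2 * m₂ + 16 / θ ^ 2 * m₁ + 1) 1 * s := by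
    rw [mul_comm]
    exact mul_le_mul_of_nonneg_right hBb hs0.le
  rw [hDtoReal]
  calc (n : ℝ)⁻¹ * ∑ j : Fin n, ∫ y, f (y j) ∂P ≤ mf + c * D + s * B := hmain
    _ ≤ mf + c * D + max (2 * m₂ + 16 / θ ^ 2 * m₁ + 1) 1 * s := by linarith
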